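/- Let X and Y be real normed vector spaces with dim X ≥ dim Y = 2, Y strictly convex, and let ρ > 0 and ε > 0. For all x, y ∈ X there exists a finite set T ⊆ X containing x and y such that every injective map f : T → Y preserving the distance ρ satisfies | ||f(x)−f(y)|| − ||x−y|| | ≤ ε. -/

import Mathlib

open Finset

section BQAux

variable {Y : Type*} [NormedAddCommGroup Y] [NormedSpace ℝ Y]

private lemma sc_comb
    (hsc : ∀ a b : Y, a ≠ 0 → b ≠ 0 → ‖a + b‖ = ‖a‖ + ‖b‖ → ∃ γ : ℝ, 0 < γ ∧ a = γ • b)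
    {r t : ℝ} (hr : 0 < r) (ht0 : 0 < t) (ht1 : t < 1) {a b : Y}
    (ha : ‖a‖ = r) (hb : ‖b‖ = r) (hab : a ≠ b) :
    ‖t • a + (1 - t) • b‖ < r := by
  have h1t : 0 < 1 - t := by linarith
  have hle : ‖t • a + (1 - t) • b‖ ≤ r := by
    calc ‖t • a + (1 - t) • b‖ ≤ ‖t • a‖ + ‖(1 - t) • b‖ := norm_add_le _ _
    _ = t * r + (1 - t) * r := by
        rw [norm_smul, norm_smul, ha, hb, Real.norm_of_nonneg ht0.le,
          Real.norm_of_nonneg h1t.le]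
    _ = r := by ring
  rcases lt_or_eq_of_le hle with h | h
  · exact h
  exfalso
  have ha0 : a ≠ 0 := by intro h0; rw [h0, norm_zero] at ha; linarith
  have hb0 : b ≠ 0 := by intro h0; rw [h0, norm_zero] at hb; linarith
  obtain ⟨γ, hγ, hγe⟩ := hsc (t • a) ((1 - t) • b) (smul_ne_zero ht0.ne' ha0)
    (smul_ne_zero h1t.ne' hb0)
    (by rw [h, norm_smul, norm_smul, ha, hb, Real.norm_of_nonneg ht0.le,
        Real.norm_of_nonneg h1t.le]; ring)
  have hae : a = (t⁻¹ * (γ * (1 - t))) • b := by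
    rw [smul_smul] at hγe
    calc a = t⁻¹ • (t • a) := by rw [inv_smul_smul₀ ht0.ne']
    _ = t⁻¹ • ((γ * (1 - t)) • b) := by rw [hγe]
    _ = (t⁻¹ * (γ * (1 - t))) • b := by rw [smul_smul]
  have hcpos : 0 < t⁻¹ * (γ * (1 - t)) := by positivity
  have hr1 : r = |t⁻¹ * (γ * (1 - t))| * r := by
    calc r = ‖a‖ := ha.symm
    _ = ‖(t⁻¹ * (γ * (1 - t))) • b‖ := by rw [← hae]
    _ = |t⁻¹ * (γ * (1 - t))| * r := by rw [norm_smul, hb, Real.norm_eq_abs]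
  have hc1 : t⁻¹ * (γ * (1 - t)) = 1 := by
    rw [abs_of_pos hcpos] at hr1; nlinarith
  rw [hc1, one_smul] at hae
  exact hab hae

private lemma mid_lt
    (hsc : ∀ a b : Y, a ≠ 0 → b ≠ 0 → ‖a + b‖ = ‖a‖ + ‖b‖ → ∃ γ : ℝ, 0 < γ ∧ a = γ • b)
    {r : ℝ} (hr : 0 < r) {q v : Y} (hv : v ≠ 0) {t₁ t₂ t₃ : ℝ}
    (h12 : t₁ < t₂) (h23 : t₂ < t₃)
    (h1 : ‖q + t₁ • v‖ = r) (h3 : ‖q + t₃ • v‖ = r) :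
    ‖q + t₂ • v‖ < r := by
  have h13 : t₁ < t₃ := h12.trans h23
  have h130 : t₃ - t₁ ≠ 0 := by intro h; linarith [sub_eq_zero.mp h]
  set lam : ℝ := (t₃ - t₂) / (t₃ - t₁) with hlam
  have hl0 : 0 < lam := by apply div_pos <;> linarith
  have hl1 : lam < 1 := by rw [hlam, div_lt_one (by linarith)]; linarith
  have hcoef : lam * t₁ + (1 - lam) * t₃ = t₂ := by
    rw [hlam]; field_simp; ring
  have hid : q + t₂ • v = lam • (q + t₁ • v) + (1 - lam) • (q + t₃ • v) := by
    have hs : lam • (q + t₁ • v) + (1 - lam) • (q + t₃ • v)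
        = q + (lam * t₁ + (1 - lam) * t₃) • v := by
      match_scalars <;> ring
    rw [hs, hcoef]
  have hne : q + t₁ • v ≠ q + t₃ • v := by
    intro h
    have h' : t₁ • v = t₃ • v := add_left_cancel h
    exact absurd (smul_left_injective ℝ hv h') h13.ne
  rw [hid]
  exact sc_comb hsc hr hl0 hl1 h1 h3 hne

private lemma combo_norm_lt {lam : ℝ} (hl0 : 0 < lam) (hl1 : lam < 1) {r : ℝ}
    {a b : Y} (ha : ‖a‖ ≤ r) (hb : ‖b‖ < r) :
    ‖lam • a + (1 - lam) • b‖ < r := by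
  calc ‖lam • a + (1 - lam) • b‖ ≤ ‖lam • a‖ + ‖(1 - lam) • b‖ := norm_add_le _ _
  _ = lam * ‖a‖ + (1 - lam) * ‖b‖ := by
      rw [norm_smul, norm_smul, Real.norm_of_nonneg hl0.le, Real.norm_of_nonneg (by linarith)]
  _ < lam * r + (1 - lam) * r := by
      apply add_lt_add_of_le_of_lt
      · exact mul_le_mul_of_nonneg_left ha hl0.le
      · exact mul_lt_mul_of_pos_left hb (by linarith)
  _ = r := by ring

private lemma circle2_core
    (hsc : ∀ a b : Y, a ≠ 0 → b ≠ 0 → ‖a + b‖ = ‖a‖ + ‖b‖ → ∃ γ : ℝ, 0 < γ ∧ a = γ • b)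
    {r : ℝ} (hr : 0 < r) {v p q m : Y} (hpq : p ≠ q)
    (hp : ‖p‖ = r) (hq : ‖q‖ = r) (hm : ‖m‖ = r)
    (hpv : ‖p - v‖ = r) (hqv : ‖q - v‖ = r) (hmv : ‖m - v‖ = r)
    {t s : ℝ} (ht0 : 0 < t) (ht1 : t < 1)
    (hcomb : t • p + (1 - t) • q = m + s • v) : False := by
  have h1 : ‖m + s • v‖ < r := by
    rw [← hcomb]; exact sc_comb hsc hr ht0 ht1 hp hq hpq
  have h2 : ‖m + (s - 1) • v‖ < r := by
    have hid : t • (p - v) + (1 - t) • (q - v) = m + (s - 1) • v := by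
      linear_combination (norm := module) hcomb
    rw [← hid]
    exact sc_comb hsc hr ht0 ht1 hpv hqv (by
      intro h; exact hpq (by linear_combination (norm := module) h))
  rcases lt_trichotomy s 0 with hs | hs | hs
  · have hpos : (0:ℝ) < 1 - s := by linarith
    have hl0 : 0 < -s / (1 - s) := div_pos (by linarith) hpos
    have hl1 : -s / (1 - s) < 1 := by rw [div_lt_one hpos]; linarith
    have hid : m - v = (-s / (1 - s)) • m + (1 - -s / (1 - s)) • (m + (s - 1) • v) := by
      match_scalars <;> field_simp <;> ring
    have hlt : ‖m - v‖ < r := by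
      rw [hid]; exact combo_norm_lt hl0 hl1 (le_of_eq hm) h2
    linarith [hmv ▸ hlt]
  · rw [hs, zero_smul, add_zero] at h1; linarith [hm ▸ h1]
  · have hpos : (0:ℝ) < 1 + s := by linarith
    have hl0 : 0 < s / (1 + s) := div_pos hs hpos
    have hl1 : s / (1 + s) < 1 := by rw [div_lt_one hpos]; linarith
    have hid : m = (s / (1 + s)) • (m - v) + (1 - s / (1 + s)) • (m + s • v) := by
      match_scalars <;> field_simp <;> ring
    have hlt : ‖m‖ < r := by
      rw [hid]; exact combo_norm_lt hl0 hl1 (le_of_eq hmv) h1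
    linarith [hm ▸ hlt]

private lemma two_circle (hY : Module.finrank ℝ Y = 2)
    (hsc : ∀ a b : Y, a ≠ 0 → b ≠ 0 → ‖a + b‖ = ‖a‖ + ‖b‖ → ∃ γ : ℝ, 0 < γ ∧ a = γ • b)
    {r : ℝ} (hr : 0 < r) {v : Y} (hv : v ≠ 0)
    {z w u : Y} (hzw : z ≠ w) (hzu : z ≠ u) (hwu : w ≠ u)
    (hz : ‖z‖ = r) (hw : ‖w‖ = r) (hu : ‖u‖ = r)
    (hzv : ‖z - v‖ = r) (hwv : ‖w - v‖ = r) (huv : ‖u - v‖ = r) : False := by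
  -- construct a linear functional vanishing exactly on span {v}
  obtain ⟨φ, hφv, hφker⟩ : ∃ φ : Y →ₗ[ℝ] ℝ, φ v = 0 ∧ ∀ y : Y, φ y = 0 → ∃ c : ℝ, y = c • v := by
    have hsp : Submodule.span ℝ ({v} : Set Y) ≠ ⊤ := by
      intro h
      have h1 : Module.finrank ℝ (Submodule.span ℝ ({v} : Set Y)) = 1 :=
        finrank_span_singleton hv
      rw [h, finrank_top, hY] at h1
      norm_num at h1
    obtain ⟨w₀, hw₀⟩ : ∃ w₀ : Y, w₀ ∉ Submodule.span ℝ ({v} : Set Y) := by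
      by_contra hcon
      push_neg at hcon
      exact hsp (Submodule.eq_top_iff'.mpr hcon)
    have hw00 : w₀ ≠ 0 := fun h => hw₀ (h ▸ Submodule.zero_mem _)
    have li : LinearIndependent ℝ ![v, w₀] := by
      rw [LinearIndependent.pair_iff]
      intro s t hst
      by_contra hcon
      rcases eq_or_ne t 0 with ht | ht
      · subst ht
        rw [zero_smul, add_zero] at hst
        rcases smul_eq_zero.mp hst with h | h
        · exact hcon ⟨h, rfl⟩
        · exact hv h
      · apply hw₀
        have h2 : t • w₀ = -(s • v) := by linear_combination (norm := module) hst
        have h3 := congrArg (fun y => t⁻¹ • y) h2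
        simp only [inv_smul_smul₀ ht] at h3
        rw [h3, show t⁻¹ • -(s • v) = (-s / t) • v by match_scalars; field_simp]
        exact Submodule.smul_mem _ _ (Submodule.mem_span_singleton_self v)
    have hcard : Fintype.card (Fin 2) = Module.finrank ℝ Y := by simp [hY]
    let B := basisOfLinearIndependentOfCardEqFinrank li hcard
    have hB : ⇑B = ![v, w₀] := coe_basisOfLinearIndependentOfCardEqFinrank li hcard
    have hB0 : B 0 = v := by rw [hB]; rfl
    refine ⟨B.coord 1, ?_, ?_⟩
    · rw [← hB0, Module.Basis.coord_apply, Module.Basis.repr_self]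
      simp
    · intro y hy
      have hrep := B.sum_repr y
      rw [Fin.sum_univ_two, hB0] at hrep
      rw [Module.Basis.coord_apply] at hy
      rw [hy, zero_smul, add_zero] at hrep
      exact ⟨B.repr y 0, hrep.symm⟩
  -- φ takes pairwise distinct values on z, w, u
  have hdist : ∀ p q : Y, p ≠ q → ‖p‖ = r → ‖q‖ = r → ‖p - v‖ = r → ‖q - v‖ = r →
      φ p ≠ φ q := by
    intro p q hne hp hq hpv hqv heq
    obtain ⟨c, hc⟩ := hφker (p - q) (by rw [map_sub, heq, sub_self])
    have hpc : p = q + c • v := by rw [← hc]; abel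
    have hc0 : c ≠ 0 := by
      rintro rfl
      rw [zero_smul, add_zero] at hpc
      exact hne hpc
    -- norms at coefficients 0, -1, c, c-1 are all r
    have n0 : ‖q + (0:ℝ) • v‖ = r := by simpa using hq
    have nm1 : ‖q + (-1:ℝ) • v‖ = r := by
      rw [show q + (-1:ℝ) • v = q - v by module]; exact hqv
    have nc : ‖q + c • v‖ = r := by rw [← hpc]; exact hp
    have ncm1 : ‖q + (c - 1) • v‖ = r := by
      rw [show q + (c - 1) • v = (q + c • v) - v by module, ← hpc]; exact hpv
    rcases lt_trichotomy c (-1) with h | h | h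
    · exact absurd nm1 (ne_of_lt (mid_lt hsc hr hv h (by norm_num) nc n0))
    · subst h
      have : ‖q + (-2 : ℝ) • v‖ = r := by norm_num at ncm1 ⊢; exact ncm1
      exact absurd nm1 (ne_of_lt (mid_lt hsc hr hv (by norm_num : (-2:ℝ) < -1) (by norm_num) this n0))
    · rcases lt_trichotomy c 0 with h' | h' | h'
      · exact absurd nc (ne_of_lt (mid_lt hsc hr hv h h' nm1 n0))
      · exact absurd h' hc0
      · exact absurd n0 (ne_of_lt (mid_lt hsc hr hv (by norm_num : (-1:ℝ) < 0) h' nm1 nc))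
  -- main middle-point argument
  have main : ∀ p q m : Y, p ≠ q → ‖p‖ = r → ‖q‖ = r → ‖m‖ = r →
      ‖p - v‖ = r → ‖q - v‖ = r → ‖m - v‖ = r → φ q < φ m → φ m < φ p → False := by
    intro p q m hpq hp hq hm hpv hqv hmv h1 h2
    have hpq' : φ q < φ p := h1.trans h2
    set t : ℝ := (φ m - φ q) / (φ p - φ q) with ht
    have ht0 : 0 < t := div_pos (by linarith) (by linarith)
    have ht1 : t < 1 := by rw [ht, div_lt_one (by linarith)]; linarith
    have hker : φ (t • p + (1 - t) • q - m) = 0 := by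
      simp only [map_sub, map_add, map_smul, smul_eq_mul]
      rw [ht]
      have hne : φ p - φ q ≠ 0 := ne_of_gt (by linarith)
      field_simp
      ring
    obtain ⟨s, hs⟩ := hφker _ hker
    exact circle2_core hsc hr hpq hp hq hm hpv hqv hmv ht0 ht1
      (by linear_combination (norm := module) hs)
  have d1 := hdist z w hzw hz hw hzv hwv
  have d2 := hdist z u hzu hz hu hzv huv
  have d3 := hdist w u hwu hw hu hwv huv
  rcases lt_trichotomy (φ z) (φ w) with h1 | h1 | h1
  · rcases lt_trichotomy (φ w) (φ u) with h2 | h2 | h2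
    · exact main u z w hzu.symm hu hz hw huv hzv hwv h1 h2
    · exact d3 h2
    · rcases lt_trichotomy (φ z) (φ u) with h3 | h3 | h3
      · exact main w z u hzw.symm hw hz hu hwv hzv huv h3 h2
      · exact d2 h3
      · exact main w u z hwu hw hu hz hwv huv hzv h3 h1
  · exact d1 h1
  · rcases lt_trichotomy (φ z) (φ u) with h2 | h2 | h2
    · exact main u w z hwu.symm hu hw hz huv hwv hzv h1 h2
    · exact d2 h2
    · rcases lt_trichotomy (φ w) (φ u) with h3 | h3 | h3
      · exact main z w u hzw hz hw hu hzv hwv huv h3 h2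
      · exact d3 h3
      · exact main z u w hzu hz hu hw hzv huv hwv h3 h1

private lemma hexagon (hY : Module.finrank ℝ Y = 2)
    (hsc : ∀ a b : Y, a ≠ 0 → b ≠ 0 → ‖a + b‖ = ‖a‖ + ‖b‖ → ∃ γ : ℝ, 0 < γ ∧ a = γ • b)
    {ρ : ℝ} (hρ : 0 < ρ) {A M B C D : Y}
    (h1 : ‖A - M‖ = ρ) (h2 : ‖M - B‖ = ρ) (h3 : ‖C - A‖ = ρ) (h4 : ‖C - M‖ = ρ)
    (h5 : ‖D - M‖ = ρ) (h6 : ‖D - B‖ = ρ) (h7 : ‖C - D‖ = ρ)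
    (hDA : D ≠ A) (hBC : B ≠ C) : B - M = M - A := by
  have hCM : C - M ≠ 0 := by
    intro h; rw [sub_eq_zero] at h; rw [h, sub_self, norm_zero] at h4; linarith
  -- Step 1: D - M = C - A
  have hD : D - M = C - A := by
    by_contra hne
    refine two_circle hY hsc hρ hCM (z := A - M) (w := D - M) (u := C - A)
      ?_ ?_ hne h1 h5 h3 ?_ ?_ ?_
    · intro h
      exact hDA (by linear_combination (norm := module) -h)
    · intro h
      have : C - M = (2:ℝ) • (A - M) := by linear_combination (norm := module) -h
      rw [this, norm_smul, h1, Real.norm_ofNat] at h4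
      linarith
    · rw [show A - M - (C - M) = -(C - A) by module, norm_neg]; exact h3
    · rw [show D - M - (C - M) = -(C - D) by module, norm_neg]; exact h7
    · rw [show C - A - (C - M) = -(A - M) by module, norm_neg]; exact h1
  -- Step 2: B - M = M - A
  have hDM : D - M ≠ 0 := by
    intro h; rw [h, norm_zero] at h5; linarith
  by_contra hne
  refine two_circle hY hsc hρ hDM (z := C - M) (w := B - M) (u := M - A)
    ?_ ?_ ?_ h4 (by rw [← norm_neg, show -(B - M) = M - B by module]; exact h2)
    (by rw [← norm_neg, show -(M - A) = A - M by module]; exact h1) ?_ ?_ ?_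
  · intro h
    exact hBC (by linear_combination (norm := module) -h)
  · intro h
    have h2A : C - A = (2:ℝ) • (M - A) := by linear_combination (norm := module) h
    have : ‖C - A‖ = 2 * ρ := by
      rw [h2A, norm_smul, Real.norm_ofNat, norm_sub_rev M A, h1]
    rw [h3] at this
    linarith
  · exact hne
  · rw [show C - M - (D - M) = C - D by module]; exact h7
  · rw [show B - M - (D - M) = -(D - B) by module, norm_neg]; exact h6
  · rw [hD, show M - A - (C - A) = -(C - M) by module, norm_neg]; exact h4

private lemma exists_dist_dist {X : Type*} [NormedAddCommGroup X] [NormedSpace ℝ X]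
    (hX : 2 ≤ Module.rank ℝ X) {u : X} (hu : u ≠ 0) {r s : ℝ} (hr : 0 < r)
    (h1 : r ≤ s + ‖u‖) (h2 : ‖u‖ ≤ r + s) (h3 : s ≤ r + ‖u‖) :
    ∃ n : X, ‖n‖ = r ∧ ‖n - u‖ = s := by
  have hu0 : 0 < ‖u‖ := norm_pos_iff.mpr hu
  obtain ⟨w, hw⟩ : ∃ w : X, w ∉ Submodule.span ℝ ({u} : Set X) := by
    by_contra hcon
    push_neg at hcon
    have htop : Submodule.span ℝ ({u} : Set X) = ⊤ := Submodule.eq_top_iff'.mpr hcon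
    have hle : Module.rank ℝ X ≤ 1 := by
      calc Module.rank ℝ X = Module.rank ℝ (⊤ : Submodule ℝ X) := (rank_top ℝ X).symm
      _ = Module.rank ℝ (Submodule.span ℝ ({u} : Set X)) := by rw [htop]
      _ ≤ 1 := by
          refine (rank_span_le _).trans ?_
          simp
    have : (2:Cardinal) ≤ 1 := hX.trans hle
    norm_num at this
  set γ : ℝ → X := fun θ => Real.cos θ • u + Real.sin θ • w with hγdef
  have hγ0 : ∀ θ, γ θ ≠ 0 := by
    intro θ h
    rcases eq_or_ne (Real.sin θ) 0 with hs | hs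
    · have hc : Real.cos θ ≠ 0 := by
        intro hc
        have := Real.sin_sq_add_cos_sq θ
        rw [hs, hc] at this; norm_num at this
      rw [hγdef] at h
      simp only [hs, zero_smul, add_zero] at h
      exact hu (by simpa [hc] using smul_eq_zero.mp h)
    · apply hw
      have hwu : w = (-Real.cos θ / Real.sin θ) • u := by
        have h' : Real.sin θ • w = -(Real.cos θ • u) := by
          rw [hγdef] at h; linear_combination (norm := module) h
        have := congrArg (fun y => (Real.sin θ)⁻¹ • y) h'
        simp only [inv_smul_smul₀ hs] at this
        rw [this, show (Real.sin θ)⁻¹ • -(Real.cos θ • u) = (-Real.cos θ / Real.sin θ) • u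
          by match_scalars; field_simp]
      rw [hwu]
      exact Submodule.smul_mem _ _ (Submodule.mem_span_singleton_self u)
  set g : ℝ → ℝ := fun θ => ‖(r / ‖γ θ‖) • γ θ - u‖ with hgdef
  have hγc : Continuous γ := by fun_prop
  have hcont : Continuous g := by
    apply Continuous.norm
    apply Continuous.sub _ continuous_const
    exact (continuous_const.div hγc.norm fun θ => norm_ne_zero_iff.mpr (hγ0 θ)).smul hγc
  have hnorm : ∀ θ, ‖(r / ‖γ θ‖) • γ θ‖ = r := by
    intro θ
    have hne : ‖γ θ‖ ≠ 0 := norm_ne_zero_iff.mpr (hγ0 θ)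
    rw [norm_smul, Real.norm_eq_abs, abs_div, abs_of_pos hr, abs_norm]
    field_simp
  have hg0 : g 0 = |r - ‖u‖| := by
    have hγ0v : γ 0 = u := by rw [hγdef]; simp
    rw [hgdef]
    simp only [hγ0v]
    rw [show (r / ‖u‖) • u - u = ((r - ‖u‖) / ‖u‖) • u by
      match_scalars; field_simp]
    rw [norm_smul, Real.norm_eq_abs, abs_div, abs_norm]
    field_simp
  have hgπ : g Real.pi = r + ‖u‖ := by
    have hγπ : γ Real.pi = -u := by rw [hγdef]; simp
    rw [hgdef]
    simp only [hγπ]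
    rw [norm_neg]
    rw [show (r / ‖u‖) • -u - u = (-((r + ‖u‖) / ‖u‖)) • u by
      match_scalars; field_simp; ring]
    rw [norm_smul, Real.norm_eq_abs, abs_neg, abs_div, abs_norm, abs_of_pos (by positivity)]
    field_simp
  have hmem : s ∈ Set.Icc (g 0) (g Real.pi) := by
    constructor
    · rw [hg0]; rw [abs_le]; constructor <;> linarith
    · rw [hgπ]; linarith
  obtain ⟨θ, _, hθ⟩ := intermediate_value_Icc Real.pi_pos.le hcont.continuousOn hmem
  exact ⟨(r / ‖γ θ‖) • γ θ, hnorm θ, hθ⟩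

private lemma chain_force {X : Type*} [NormedAddCommGroup X] [NormedSpace ℝ X]
    (hY : Module.finrank ℝ Y = 2)
    (hsc : ∀ a b : Y, a ≠ 0 → b ≠ 0 → ‖a + b‖ = ‖a‖ + ‖b‖ → ∃ γ : ℝ, 0 < γ ∧ a = γ • b)
    {ρ : ℝ} (hρ : 0 < ρ) (a V n : X) (hV : ‖V‖ = ρ) (hn : ‖n‖ = ρ) (hnV : ‖n - V‖ = ρ)
    (N : ℕ) (T : Finset X)
    (hmem : ∀ i : ℕ, i ≤ N → a + (i:ℝ) • V ∈ T ∧ a + (i:ℝ) • V + n ∈ T)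
    (f : X → Y) (hinj : Set.InjOn f ↑T)
    (hpres : ∀ p ∈ T, ∀ q ∈ T, ‖p - q‖ = ρ → ‖f p - f q‖ = ρ) :
    ∀ i : ℕ, i ≤ N → f (a + (i:ℝ) • V) = f a + (i:ℝ) • (f (a + V) - f a) := by
  have hnm : n ≠ -V := by
    intro h
    rw [h, show -V - V = -((2:ℝ) • V) by module, norm_neg, norm_smul, Real.norm_ofNat, hV] at hnV
    linarith
  have hn2 : n ≠ (2:ℝ) • V := by
    intro h
    rw [h, norm_smul, Real.norm_ofNat, hV] at hn
    linarith
  have key : ∀ j : ℕ, j + 2 ≤ N →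
      f (a + ((j:ℝ) + 2) • V) - f (a + ((j:ℝ) + 1) • V)
        = f (a + ((j:ℝ) + 1) • V) - f (a + (j:ℝ) • V) := by
    intro j hj
    -- memberships
    have m0 := (hmem j (by omega)).1
    have m1 : a + ((j:ℝ) + 1) • V ∈ T := by
      have := (hmem (j+1) (by omega)).1; push_cast at this; exact this
    have m2 : a + ((j:ℝ) + 2) • V ∈ T := by
      have := (hmem (j+2) (by omega)).1; push_cast at this; exact this
    have mc : a + (j:ℝ) • V + n ∈ T := (hmem j (by omega)).2
    have md : a + ((j:ℝ) + 1) • V + n ∈ T := by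
      have := (hmem (j+1) (by omega)).2; push_cast at this; exact this
    -- the hexagon in Y
    have e1 : ‖f (a + (j:ℝ) • V) - f (a + ((j:ℝ)+1) • V)‖ = ρ :=
      hpres _ m0 _ m1 (by
        rw [show (a + (j:ℝ) • V) - (a + ((j:ℝ)+1) • V) = -V by module, norm_neg, hV])
    have e2 : ‖f (a + ((j:ℝ)+1) • V) - f (a + ((j:ℝ)+2) • V)‖ = ρ :=
      hpres _ m1 _ m2 (by
        rw [show (a + ((j:ℝ)+1) • V) - (a + ((j:ℝ)+2) • V) = -V by module, norm_neg, hV])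
    have e3 : ‖f (a + (j:ℝ) • V + n) - f (a + (j:ℝ) • V)‖ = ρ :=
      hpres _ mc _ m0 (by
        rw [show (a + (j:ℝ) • V + n) - (a + (j:ℝ) • V) = n by module, hn])
    have e4 : ‖f (a + (j:ℝ) • V + n) - f (a + ((j:ℝ)+1) • V)‖ = ρ :=
      hpres _ mc _ m1 (by
        rw [show (a + (j:ℝ) • V + n) - (a + ((j:ℝ)+1) • V) = n - V by module, hnV])
    have e5 : ‖f (a + ((j:ℝ)+1) • V + n) - f (a + ((j:ℝ)+1) • V)‖ = ρ :=
      hpres _ md _ m1 (by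
        rw [show (a + ((j:ℝ)+1) • V + n) - (a + ((j:ℝ)+1) • V) = n by module, hn])
    have e6 : ‖f (a + ((j:ℝ)+1) • V + n) - f (a + ((j:ℝ)+2) • V)‖ = ρ :=
      hpres _ md _ m2 (by
        rw [show (a + ((j:ℝ)+1) • V + n) - (a + ((j:ℝ)+2) • V) = n - V by module, hnV])
    have e7 : ‖f (a + (j:ℝ) • V + n) - f (a + ((j:ℝ)+1) • V + n)‖ = ρ :=
      hpres _ mc _ md (by
        rw [show (a + (j:ℝ) • V + n) - (a + ((j:ℝ)+1) • V + n) = -V by module, norm_neg, hV])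
    have hDA : f (a + ((j:ℝ)+1) • V + n) ≠ f (a + (j:ℝ) • V) := by
      apply hinj.ne md m0
      intro h
      apply hnm
      have : n + V = 0 := by
        have h' : a + ((j:ℝ)+1) • V + n = a + (j:ℝ) • V := h
        linear_combination (norm := module) h'
      linear_combination (norm := module) this
    have hBC : f (a + ((j:ℝ)+2) • V) ≠ f (a + (j:ℝ) • V + n) := by
      apply hinj.ne m2 mc
      intro h
      apply hn2
      have h' : a + ((j:ℝ)+2) • V = a + (j:ℝ) • V + n := h
      linear_combination (norm := module) -h'
    have := hexagon hY hsc hρ e1 e2 e3 e4 e5 e6 e7 hDA hBC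
    linear_combination (norm := module) this
  have step : ∀ j : ℕ, j + 1 ≤ N →
      f (a + ((j:ℝ) + 1) • V) - f (a + (j:ℝ) • V) = f (a + V) - f a := by
    intro j
    induction j with
    | zero => intro _; norm_num
    | succ k ih =>
      intro hk
      have hkey := key k (by omega)
      have ihk := ih (by omega)
      push_cast
      rw [show ((k:ℝ) + 1 + 1) = (k:ℝ) + 2 by ring]
      rw [hkey]
      exact ihk
  intro i
  induction i with
  | zero => intro _; simp
  | succ j ih =>
    intro hj
    have hstep := step j (by omega)
    have ihj := ih (by omega)
    push_cast
    have : f (a + ((j:ℝ) + 1) • V) = f (a + (j:ℝ) • V) + (f (a + V) - f a) := by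
      rw [← hstep]; abel
    rw [this, ihj]
    module

variable {X : Type*} [NormedAddCommGroup X] [NormedSpace ℝ X]

private lemma rat_force
    (hX : 2 ≤ Module.rank ℝ X) (hY : Module.finrank ℝ Y = 2)
    (hsc : ∀ a b : Y, a ≠ 0 → b ≠ 0 → ‖a + b‖ = ‖a‖ + ‖b‖ → ∃ γ : ℝ, 0 < γ ∧ a = γ • b)
    {ρ : ℝ} (hρ : 0 < ρ) (x z : X) (hxz : x ≠ z) (p q : ℕ) (hp : 0 < p) (hq : 0 < q)
    (hd : ‖x - z‖ = (p : ℝ) / (q : ℝ) * ρ) :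
    ∃ T : Finset X, x ∈ T ∧ z ∈ T ∧
      ∀ f : X → Y, Set.InjOn f ↑T →
        (∀ a ∈ T, ∀ b ∈ T, ‖a - b‖ = ρ → ‖f a - f b‖ = ρ) →
        ‖f x - f z‖ = ‖x - z‖ := by
  classical
  have hp' : (0:ℝ) < p := by exact_mod_cast hp
  have hq' : (0:ℝ) < q := by exact_mod_cast hq
  have hq1 : (1:ℝ) ≤ q := by exact_mod_cast hq
  set u : X := z - x with hu
  have hu0 : u ≠ 0 := sub_ne_zero.mpr (Ne.symm hxz)
  have hun : ‖u‖ = (p : ℝ) / (q : ℝ) * ρ := by rw [hu, norm_sub_rev]; exact hd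
  have hun0 : 0 < ‖u‖ := norm_pos_iff.mpr hu0
  -- apex point a
  obtain ⟨n', hn'1, hn'2⟩ : ∃ n' : X, ‖n'‖ = (p:ℝ) * ρ ∧ ‖n' - u‖ = (p:ℝ) * ρ := by
    apply exists_dist_dist hX hu0 (by positivity)
    · linarith
    · rw [hun]
      have : (p:ℝ) / q ≤ p := by
        rw [div_le_iff₀ hq']; nlinarith
      nlinarith
    · linarith
  set a : X := x + n' with ha
  set V₁ : X := (p:ℝ)⁻¹ • (x - a) with hV₁def
  set V₂ : X := (p:ℝ)⁻¹ • (z - a) with hV₂def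
  have hxa : x - a = -n' := by rw [ha]; abel
  have hza : z - a = u - n' := by rw [ha, hu]; abel
  have hV₁ : ‖V₁‖ = ρ := by
    rw [hV₁def, hxa, norm_smul, norm_neg, hn'1, Real.norm_eq_abs, abs_inv,
      abs_of_pos hp']
    field_simp
  have hV₂ : ‖V₂‖ = ρ := by
    rw [hV₂def, hza, norm_smul, norm_sub_rev u n', hn'2, Real.norm_eq_abs, abs_inv,
      abs_of_pos hp']
    field_simp
  have hV₁0 : V₁ ≠ 0 := by intro h; rw [h, norm_zero] at hV₁; linarith
  have hV₂0 : V₂ ≠ 0 := by intro h; rw [h, norm_zero] at hV₂; linarith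
  set N : ℕ := p * q with hN
  set P : X := a + (N:ℝ) • V₁ with hP
  set Q : X := a + (N:ℝ) • V₂ with hQ
  have hQP : Q - P = (q:ℝ) • u := by
    rw [hP, hQ, hV₁def, hV₂def, hN, hza, hxa]
    push_cast
    match_scalars <;> field_simp <;> ring
  have hQPn : ‖Q - P‖ = (p:ℝ) * ρ := by
    rw [hQP, norm_smul, hun, Real.norm_eq_abs, abs_of_pos hq']
    field_simp
  set W : X := (p:ℝ)⁻¹ • (Q - P) with hW
  have hWn : ‖W‖ = ρ := by
    rw [hW, norm_smul, hQPn, Real.norm_eq_abs, abs_inv, abs_of_pos hp']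
    field_simp
  have hW0 : W ≠ 0 := by intro h; rw [h, norm_zero] at hWn; linarith
  -- gadget vectors
  have gadget : ∀ V : X, V ≠ 0 → ‖V‖ = ρ → ∃ n : X, ‖n‖ = ρ ∧ ‖n - V‖ = ρ := by
    intro V h0 hVn
    apply exists_dist_dist hX h0 hρ <;> rw [hVn] <;> linarith
  obtain ⟨n₁, hn₁, hn₁V⟩ := gadget V₁ hV₁0 hV₁
  obtain ⟨n₂, hn₂, hn₂V⟩ := gadget V₂ hV₂0 hV₂
  obtain ⟨n₃, hn₃, hn₃V⟩ := gadget W hW0 hWn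
  -- the witness set
  set S1 : Finset X := (range (N+1)).image (fun i : ℕ => a + (i:ℝ) • V₁) with hS1
  set S2 : Finset X := (range (N+1)).image (fun i : ℕ => a + (i:ℝ) • V₁ + n₁) with hS2
  set S3 : Finset X := (range (N+1)).image (fun i : ℕ => a + (i:ℝ) • V₂) with hS3
  set S4 : Finset X := (range (N+1)).image (fun i : ℕ => a + (i:ℝ) • V₂ + n₂) with hS4
  set S5 : Finset X := (range (p+1)).image (fun i : ℕ => P + (i:ℝ) • W) with hS5
  set S6 : Finset X := (range (p+1)).image (fun i : ℕ => P + (i:ℝ) • W + n₃) with hS6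
  set Tw : Finset X := S1 ∪ S2 ∪ S3 ∪ S4 ∪ S5 ∪ S6 with hTw
  have hsub1 : S1 ⊆ Tw := by
    rw [hTw]; intro t ht
    exact mem_union_left _ (mem_union_left _ (mem_union_left _ (mem_union_left _
      (mem_union_left _ ht))))
  have hsub2 : S2 ⊆ Tw := by
    rw [hTw]; intro t ht
    exact mem_union_left _ (mem_union_left _ (mem_union_left _ (mem_union_left _
      (mem_union_right _ ht))))
  have hsub3 : S3 ⊆ Tw := by
    rw [hTw]; intro t ht
    exact mem_union_left _ (mem_union_left _ (mem_union_left _ (mem_union_right _ ht)))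
  have hsub4 : S4 ⊆ Tw := by
    rw [hTw]; intro t ht
    exact mem_union_left _ (mem_union_left _ (mem_union_right _ ht))
  have hsub5 : S5 ⊆ Tw := by
    rw [hTw]; intro t ht
    exact mem_union_left _ (mem_union_right _ ht)
  have hsub6 : S6 ⊆ Tw := by
    rw [hTw]; intro t ht
    exact mem_union_right _ ht
  have hpN : p ≤ N := by rw [hN]; exact Nat.le_mul_of_pos_right _ hq
  have hx : x = a + (p:ℝ) • V₁ := by
    rw [hV₁def, smul_smul, mul_inv_cancel₀ hp'.ne', one_smul]; abel
  have hz : z = a + (p:ℝ) • V₂ := by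
    rw [hV₂def, smul_smul, mul_inv_cancel₀ hp'.ne', one_smul]; abel
  have hQeq : Q = P + (p:ℝ) • W := by
    rw [hW, smul_smul, mul_inv_cancel₀ hp'.ne', one_smul]; abel
  refine ⟨Tw, ?_, ?_, ?_⟩
  · rw [hx]
    exact hsub1 (mem_image_of_mem _ (mem_range.mpr (by omega)))
  · rw [hz]
    exact hsub3 (mem_image_of_mem _ (mem_range.mpr (by omega)))
  · intro f hinj hpres
    have ch1 := chain_force hY hsc hρ a V₁ n₁ hV₁ hn₁ hn₁V N Tw
      (fun i hi => ⟨hsub1 (mem_image_of_mem _ (mem_range.mpr (by omega))),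
        hsub2 (mem_image_of_mem _ (mem_range.mpr (by omega)))⟩) f hinj hpres
    have ch2 := chain_force hY hsc hρ a V₂ n₂ hV₂ hn₂ hn₂V N Tw
      (fun i hi => ⟨hsub3 (mem_image_of_mem _ (mem_range.mpr (by omega))),
        hsub4 (mem_image_of_mem _ (mem_range.mpr (by omega)))⟩) f hinj hpres
    have ch3 := chain_force hY hsc hρ P W n₃ hWn hn₃ hn₃V p Tw
      (fun i hi => ⟨hsub5 (mem_image_of_mem _ (mem_range.mpr (by omega))),
        hsub6 (mem_image_of_mem _ (mem_range.mpr (by omega)))⟩) f hinj hpres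
    set e₁ : Y := f (a + V₁) - f a with he₁
    set e₂ : Y := f (a + V₂) - f a with he₂
    set e₃ : Y := f (P + W) - f P with he₃
    have hfx : f x = f a + (p:ℝ) • e₁ := by rw [hx]; exact ch1 p hpN
    have hfz : f z = f a + (p:ℝ) • e₂ := by rw [hz]; exact ch2 p hpN
    have hfP : f P = f a + (N:ℝ) • e₁ := ch1 N le_rfl
    have hfQ : f Q = f a + (N:ℝ) • e₂ := ch2 N le_rfl
    have hfQ3 : f Q = f P + (p:ℝ) • e₃ := by rw [hQeq]; exact ch3 p le_rfl
    -- norm of e₃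
    have hmemP : P ∈ Tw := hsub1 (mem_image_of_mem _ (mem_range.mpr (Nat.lt_succ_self N)))
    have hmemPW : P + W ∈ Tw := by
      have h1 : P + W = P + ((1:ℕ):ℝ) • W := by push_cast; rw [one_smul]
      rw [h1]
      exact hsub5 (mem_image_of_mem _ (mem_range.mpr (show 1 < p + 1 by omega)))
    have he₃n : ‖e₃‖ = ρ := by
      rw [he₃]
      exact hpres _ hmemPW _ hmemP (by
        rw [show (P + W) - P = W by abel, hWn])
    -- key identity
    have hkey : (p:ℝ) • ((q:ℝ) • (e₂ - e₁)) = (p:ℝ) • e₃ := by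
      have h' := hfQ3
      rw [hfP, hfQ] at h'
      have hNc : ((N:ℕ):ℝ) = (p:ℝ) * (q:ℝ) := by rw [hN]; push_cast; ring
      rw [smul_smul, ← hNc]
      linear_combination (norm := module) h'
    have hq_e : (q:ℝ) • (e₂ - e₁) = e₃ :=
      smul_right_injective Y hp'.ne' hkey
    have hdiff : ‖e₂ - e₁‖ = ρ / (q:ℝ) := by
      have : ‖(q:ℝ) • (e₂ - e₁)‖ = ρ := by rw [hq_e, he₃n]
      rw [norm_smul, Real.norm_eq_abs, abs_of_pos hq'] at this
      field_simp at this ⊢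
      linarith
    have : f x - f z = (p:ℝ) • (e₁ - e₂) := by
      rw [hfx, hfz]; module
    rw [this, norm_smul, Real.norm_eq_abs, abs_of_pos hp', norm_sub_rev, hdiff, hd]
    field_simp

private lemma rat_real {r : ℚ} (hr : 0 < r) :
    (r : ℝ) = (r.num.toNat : ℝ) / (r.den : ℝ) ∧ 0 < r.num.toNat ∧ 0 < r.den := by
  have hnum : 0 < r.num := Rat.num_pos.mpr hr
  refine ⟨?_, by omega, r.pos⟩
  rw [Rat.cast_def]
  congr 1
  exact_mod_cast (Int.toNat_of_nonneg hnum.le).symm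

end BQAux

/-- Item 2 of the Theorem: for all `x, y ∈ X` and `ε > 0` there exists a finite set `T`
containing `x` and `y` such that every injective map `f : T → Y` preserving the
distance `ρ` preserves the distance between `x` and `y` to within `ε`. -/
theorem discrete_beckman_quarles_approx {X Y : Type*}
    [NormedAddCommGroup X] [NormedSpace ℝ X] [NormedAddCommGroup Y] [NormedSpace ℝ Y]
    (hX : 2 ≤ Module.rank ℝ X) (hY : Module.finrank ℝ Y = 2)
    (hsc : ∀ a b : Y, a ≠ 0 → b ≠ 0 → ‖a + b‖ = ‖a‖ + ‖b‖ → ∃ γ : ℝ, 0 < γ ∧ a = γ • b)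
    (ρ : ℝ) (hρ : 0 < ρ) (ε : ℝ) (hε : 0 < ε) (x y : X) :
    ∃ T : Finset X, x ∈ T ∧ y ∈ T ∧
      ∀ f : X → Y, Set.InjOn f ↑T →
        (∀ a ∈ T, ∀ b ∈ T, ‖a - b‖ = ρ → ‖f a - f b‖ = ρ) →
        |‖f x - f y‖ - ‖x - y‖| ≤ ε := by
  open Finset in
  classical
  by_cases hxy : x = y
  · subst hxy
    exact ⟨{x}, mem_singleton_self x, mem_singleton_self x,
      fun f _ _ => by simp; linarith⟩
  · have hd0 : 0 < ‖x - y‖ := norm_pos_iff.mpr (sub_ne_zero.mpr hxy)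
    set d₀ : ℝ := ‖x - y‖ with hd₀
    have hmin : 0 < min (ε/2) d₀ := lt_min (by linarith) hd0
    obtain ⟨r₂, hr₂0, hr₂1⟩ := exists_rat_btwn (show (0:ℝ) < min (ε/2) d₀ / ρ by positivity)
    have hr₂pos : (0:ℚ) < r₂ := by exact_mod_cast hr₂0
    set d₂ : ℝ := (r₂ : ℝ) * ρ with hd₂def
    have hd₂0 : 0 < d₂ := by
      apply mul_pos _ hρ; exact_mod_cast hr₂pos
    have hd₂lt : d₂ < min (ε/2) d₀ := by
      rw [hd₂def]
      exact (lt_div_iff₀ hρ).mp hr₂1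
    have hd₂ε : d₂ ≤ ε/2 := (hd₂lt.trans_le (min_le_left _ _)).le
    have hd₂d : d₂ < d₀ := hd₂lt.trans_le (min_le_right _ _)
    obtain ⟨r₁, hr₁0, hr₁1⟩ := exists_rat_btwn
      (show (d₀ - d₂)/ρ < d₀/ρ from by
        apply div_lt_div_of_pos_right (by linarith) hρ)
    set d₁ : ℝ := (r₁ : ℝ) * ρ with hd₁def
    have hd₁l : d₀ - d₂ < d₁ := by
      rw [hd₁def]; exact (div_lt_iff₀ hρ).mp hr₁0
    have hd₁u : d₁ < d₀ := by
      rw [hd₁def]; exact (lt_div_iff₀ hρ).mp hr₁1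
    have hd₁0 : 0 < d₁ := by linarith
    have hr₁pos : (0:ℚ) < r₁ := by
      have h0 : (0:ℝ) < (r₁:ℝ) := by
        by_contra hcon
        push_neg at hcon
        nlinarith [hd₁def]
      exact_mod_cast h0
    -- choose z
    obtain ⟨n, hn1, hn2⟩ := exists_dist_dist hX (sub_ne_zero.mpr hxy) hd₂0
      (s := d₁) (by rw [← hd₀]; linarith) (by rw [← hd₀]; linarith) (by rw [← hd₀]; linarith)
    set z : X := y + n with hzdef
    have hzy : ‖z - y‖ = d₂ := by rw [hzdef, add_sub_cancel_left]; exact hn1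
    have hxz : ‖x - z‖ = d₁ := by
      rw [show x - z = -(n - (x - y)) by rw [hzdef]; abel, norm_neg]
      exact hn2
    have hxz0 : x ≠ z := by
      intro h; rw [h, sub_self, norm_zero] at hxz; linarith
    have hzy0 : z ≠ y := by
      intro h; rw [h, sub_self, norm_zero] at hzy; linarith
    -- rational data
    obtain ⟨hc₁, hp₁, hq₁⟩ := rat_real hr₁pos
    obtain ⟨hc₂, hp₂, hq₂⟩ := rat_real hr₂pos
    obtain ⟨T₁, hxT₁, hzT₁, hforce₁⟩ := rat_force hX hY hsc hρ x z hxz0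
      r₁.num.toNat r₁.den hp₁ hq₁ (by rw [hxz, hd₁def, hc₁])
    obtain ⟨T₂, hzT₂, hyT₂, hforce₂⟩ := rat_force hX hY hsc hρ z y hzy0
      r₂.num.toNat r₂.den hp₂ hq₂ (by rw [hzy, hd₂def, hc₂])
    refine ⟨T₁ ∪ T₂, mem_union_left _ hxT₁, mem_union_right _ hyT₂, ?_⟩
    intro f hinj hpres
    have hsub₁ : (T₁ : Set X) ⊆ ((T₁ ∪ T₂ : Finset X) : Set X) := by
      intro t ht; simp only [coe_union, Set.mem_union] at *; exact Or.inl ht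
    have hsub₂ : (T₂ : Set X) ⊆ ((T₁ ∪ T₂ : Finset X) : Set X) := by
      intro t ht; simp only [coe_union, Set.mem_union] at *; exact Or.inr ht
    have h1 := hforce₁ f (hinj.mono hsub₁)
      (fun a ha b hb hab => hpres a (mem_union_left _ ha) b (mem_union_left _ hb) hab)
    have h2 := hforce₂ f (hinj.mono hsub₂)
      (fun a ha b hb hab => hpres a (mem_union_right _ ha) b (mem_union_right _ hb) hab)
    rw [hxz] at h1
    rw [hzy] at h2
    have htri1 : ‖f x - f y‖ ≤ d₁ + d₂ := by
      calc ‖f x - f y‖ = ‖(f x - f z) + (f z - f y)‖ := by rw [show (f x - f z) + (f z - f y) = f x - f y by abel]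
      _ ≤ ‖f x - f z‖ + ‖f z - f y‖ := norm_add_le _ _
      _ = d₁ + d₂ := by rw [h1, h2]
    have htri2 : d₁ ≤ ‖f x - f y‖ + d₂ := by
      calc d₁ = ‖f x - f z‖ := h1.symm
      _ = ‖(f x - f y) + (f y - f z)‖ := by rw [show (f x - f y) + (f y - f z) = f x - f z by abel]
      _ ≤ ‖f x - f y‖ + ‖f y - f z‖ := norm_add_le _ _
      _ = ‖f x - f y‖ + d₂ := by rw [norm_sub_rev (f y) (f z), h2]
    rw [abs_le]
    constructor <;> linarith
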